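/- Define Sdet(A) = (det c(A))^{1/2} for A ∈ M_n(ℍ), where A = X + jY with X, Y complex matrices and c(A) is the 2n×2n complex matrix [[X, −conj(Y)],[Y, conj(X)]]. Then Sdet is multiplicative: Sdet(AB) = Sdet(A)·Sdet(B) for all A, B ∈ M_n(ℍ). -/

import Mathlib

open Matrix
open scoped Quaternion

/-- The complex "X" part of a quaternion `q = X + jY`. -/
def qPartX (q : Quaternion ℝ) : ℂ := ⟨q.re, q.imI⟩

/-- The complex "Y" part of a quaternion `q = X + jY`. -/
def qPartY (q : Quaternion ℝ) : ℂ := ⟨q.imJ, -q.imK⟩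

/-- The complex matrix `c(A) = [[X, -conj Y],[Y, conj X]]` associated to `A = X + jY`. -/
def cMat {m : Type} [Fintype m] [DecidableEq m] (A : Matrix m m (Quaternion ℝ)) :
    Matrix (m ⊕ m) (m ⊕ m) ℂ :=
  Matrix.fromBlocks (A.map qPartX) (A.map fun q => -(starRingEnd ℂ) (qPartY q))
    (A.map qPartY) (A.map fun q => (starRingEnd ℂ) (qPartX q))

/-- Study's determinant `Sdet A = (det c(A))^(1/2)`. -/
noncomputable def Sdet {m : Type} [Fintype m] [DecidableEq m]
    (A : Matrix m m (Quaternion ℝ)) : ℝ :=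
  Real.sqrt (cMat A).det.re

lemma qPartX_add (p q : Quaternion ℝ) : qPartX (p + q) = qPartX p + qPartX q := by
  apply Complex.ext <;> simp [qPartX]

lemma qPartY_add (p q : Quaternion ℝ) : qPartY (p + q) = qPartY p + qPartY q := by
  apply Complex.ext <;> simp [qPartY] <;> ring

def qPartXHom : Quaternion ℝ →+ ℂ := ⟨⟨qPartX, by apply Complex.ext <;> simp [qPartX]⟩, qPartX_add⟩
def qPartYHom : Quaternion ℝ →+ ℂ := ⟨⟨qPartY, by apply Complex.ext <;> simp [qPartY]⟩, qPartY_add⟩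

lemma qPartX_mul (p q : Quaternion ℝ) :
    qPartX (p * q) = qPartX p * qPartX q - (starRingEnd ℂ) (qPartY p) * qPartY q := by
  apply Complex.ext <;>
    simp [qPartX, qPartY, Quaternion.re_mul, Quaternion.imI_mul, Complex.mul_re,
      Complex.mul_im] <;> ring

lemma qPartY_mul (p q : Quaternion ℝ) :
    qPartY (p * q) = qPartY p * qPartX q + (starRingEnd ℂ) (qPartX p) * qPartY q := by
  apply Complex.ext <;>
    simp [qPartX, qPartY, Quaternion.imJ_mul, Quaternion.imK_mul, Complex.mul_re,
      Complex.mul_im] <;> ring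


lemma cMat_one {m : Type} [Fintype m] [DecidableEq m] :
    cMat (1 : Matrix m m (Quaternion ℝ)) = 1 := by
  ext (i | i) (j | j) <;> by_cases h : i = j <;>
    simp [cMat, Matrix.one_apply, h, qPartX, qPartY, Complex.ext_iff]

lemma cMat_mul {m : Type} [Fintype m] [DecidableEq m] (A B : Matrix m m (Quaternion ℝ)) :
    cMat (A * B) = cMat A * cMat B := by
  have hX : ∀ f : m → Quaternion ℝ, qPartX (∑ k, f k) = ∑ k, qPartX (f k) :=
    fun f => map_sum qPartXHom f Finset.univ
  have hY : ∀ f : m → Quaternion ℝ, qPartY (∑ k, f k) = ∑ k, qPartY (f k) :=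
    fun f => map_sum qPartYHom f Finset.univ
  ext (i | i) (j | j) <;>
    simp only [cMat, fromBlocks_apply₁₁, fromBlocks_apply₁₂, fromBlocks_apply₂₁,
      fromBlocks_apply₂₂, Matrix.map_apply, Matrix.mul_apply, Fintype.sum_sum_type,
      hX, hY, qPartX_mul, qPartY_mul, map_sum, map_add, _root_.map_mul, map_sub, map_neg, Complex.conj_conj,
      neg_add, neg_sub, ← Finset.sum_neg_distrib] <;>
    rw [← Finset.sum_add_distrib] <;>
    exact Finset.sum_congr rfl fun k _ => by ring

namespace QM

variable {𝕜 : Type*} [DivisionRing 𝕜]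

section Transvection

variable {n : Type*} [DecidableEq n] (i j : n)

def transvection (c : 𝕜) : Matrix n n 𝕜 :=
  1 + Matrix.single i j c

@[simp]
theorem transvection_zero : transvection i j (0 : 𝕜) = 1 := by simp [transvection]

variable [Fintype n]

@[simp]
theorem transvection_mul_apply_same (b : n) (c : 𝕜) (M : Matrix n n 𝕜) :
    (transvection i j c * M) i b = M i b + c * M j b := by simp [transvection, Matrix.add_mul]

@[simp]
theorem mul_transvection_apply_same (a : n) (c : 𝕜) (M : Matrix n n 𝕜) :
    (M * transvection i j c) a j = M a j + M a i * c := by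
  simp [transvection, Matrix.mul_add]

@[simp]
theorem transvection_mul_apply_of_ne (a b : n) (ha : a ≠ i) (c : 𝕜) (M : Matrix n n 𝕜) :
    (transvection i j c * M) a b = M a b := by simp [transvection, Matrix.add_mul, ha]

@[simp]
theorem mul_transvection_apply_of_ne (a b : n) (hb : b ≠ j) (c : 𝕜) (M : Matrix n n 𝕜) :
    (M * transvection i j c) a b = M a b := by simp [transvection, Matrix.mul_add, hb]

end Transvection

section Struct

structure TStruct (n : Type*) (𝕜 : Type*) where
  (i j : n)
  hij : i ≠ j
  c : 𝕜

variable {n : Type*}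

namespace TStruct

variable [DecidableEq n]

def toMatrix (t : TStruct n 𝕜) : Matrix n n 𝕜 :=
  transvection t.i t.j t.c

@[simp]
theorem toMatrix_mk (i j : n) (hij : i ≠ j) (c : 𝕜) :
    TStruct.toMatrix ⟨i, j, hij, c⟩ = transvection i j c :=
  rfl

open Sum

variable (p : Type*)

def sumInl (t : TStruct n 𝕜) : TStruct (n ⊕ p) 𝕜 where
  i := inl t.i
  j := inl t.j
  hij := by simp [t.hij]
  c := t.c

variable [DecidableEq p]

theorem toMatrix_sumInl (t : TStruct n 𝕜) :
    (t.sumInl p).toMatrix = fromBlocks t.toMatrix 0 0 1 := by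
  cases t
  ext (a | a) (b | b)
  · by_cases h : a = b <;> simp [TStruct.sumInl, transvection, h, single]
  · simp [TStruct.sumInl, transvection, single]
  · simp [TStruct.sumInl, transvection, single]
  · by_cases h : a = b <;> simp [TStruct.sumInl, transvection, h, single]

@[simp]
theorem sumInl_toMatrix_prod_mul [Fintype n] [Fintype p] (M : Matrix n n 𝕜)
    (L : List (TStruct n 𝕜)) (N : Matrix p p 𝕜) :
    (L.map (toMatrix ∘ sumInl p)).prod * fromBlocks M 0 0 N =
      fromBlocks ((L.map toMatrix).prod * M) 0 0 N := by
  induction' L with t L IH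
  · simp
  · simp [Matrix.mul_assoc, IH, toMatrix_sumInl, fromBlocks_multiply]

@[simp]
theorem mul_sumInl_toMatrix_prod [Fintype n] [Fintype p] (M : Matrix n n 𝕜)
    (L : List (TStruct n 𝕜)) (N : Matrix p p 𝕜) :
    fromBlocks M 0 0 N * (L.map (toMatrix ∘ sumInl p)).prod =
      fromBlocks (M * (L.map toMatrix).prod) 0 0 N := by
  induction' L with t L IH generalizing M N
  · simp
  · simp [IH, toMatrix_sumInl, fromBlocks_multiply]

variable {p}

def reindexEquiv (e : n ≃ p) (t : TStruct n 𝕜) : TStruct p 𝕜 where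
  i := e t.i
  j := e t.j
  hij := by simp [t.hij]
  c := t.c

variable [Fintype n] [Fintype p]

theorem toMatrix_reindexEquiv (e : n ≃ p) (t : TStruct n 𝕜) :
    (t.reindexEquiv e).toMatrix = reindexAlgEquiv ℕ 𝕜 e t.toMatrix := by
  rcases t with ⟨t_i, t_j, _⟩
  ext a b
  simp only [reindexEquiv, transvection, mul_boole, toMatrix_mk,
    submatrix_apply, reindex_apply, Pi.smul_apply, reindexAlgEquiv_apply, Matrix.add_apply]
  by_cases ha : e t_i = a <;> by_cases hb : e t_j = b <;> by_cases hab : a = b <;>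
    simp [ha, hb, hab, ← e.apply_eq_iff_eq_symm_apply, single, Matrix.one_apply]

theorem toMatrix_reindexEquiv_prod (e : n ≃ p) (L : List (TStruct n 𝕜)) :
    (L.map (toMatrix ∘ reindexEquiv e)).prod = reindexAlgEquiv ℕ 𝕜 e (L.map toMatrix).prod := by
  induction' L with t L IH
  · simp
  · simp only [toMatrix_reindexEquiv, IH, Function.comp_apply, List.prod_cons,
      reindexAlgEquiv_apply, List.map]
    exact (reindexAlgEquiv_mul ℕ 𝕜 _ _ _).symm

end TStruct

end Struct


namespace Pivot

variable {𝕜 : Type*} [DivisionRing 𝕜] {r : ℕ} (M : Matrix (Fin r ⊕ Unit) (Fin r ⊕ Unit) 𝕜)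

open Unit Sum Fin TStruct

def listTransvecCol : List (Matrix (Fin r ⊕ Unit) (Fin r ⊕ Unit) 𝕜) :=
  List.ofFn fun i : Fin r =>
    transvection (inl i) (inr unit) <| -M (inl i) (inr unit) / M (inr unit) (inr unit)

def listTransvecRow : List (Matrix (Fin r ⊕ Unit) (Fin r ⊕ Unit) 𝕜) :=
  List.ofFn fun i : Fin r =>
    transvection (inr unit) (inl i) <| -(M (inr unit) (inr unit))⁻¹ * M (inr unit) (inl i)

@[simp]
theorem length_listTransvecCol : (listTransvecCol M).length = r := by simp [listTransvecCol]

@[simp]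
theorem length_listTransvecRow : (listTransvecRow M).length = r := by simp [listTransvecRow]

theorem listTransvecCol_mul_last_row_drop (i : Fin r ⊕ Unit) {k : ℕ} (hk : k ≤ r) :
    (((listTransvecCol M).drop k).prod * M) (inr unit) i = M (inr unit) i := by
  induction hk using Nat.decreasingInduction with
  | of_succ n hn IH =>
    have hn' : n < (listTransvecCol M).length := by simpa [listTransvecCol] using hn
    rw [List.drop_eq_getElem_cons hn']
    have A : (listTransvecCol M)[n] =
        transvection (inl (⟨n, hn⟩ : Fin r)) (inr unit)
          (-M (inl ⟨n, hn⟩) (inr unit) / M (inr unit) (inr unit)) := by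
      simp [listTransvecCol]
    simpa [A, Matrix.mul_assoc]
  | self =>
    simp only [length_listTransvecCol, le_refl, List.drop_eq_nil_of_le, List.prod_nil,
      Matrix.one_mul]

theorem listTransvecCol_mul_last_row (i : Fin r ⊕ Unit) :
    ((listTransvecCol M).prod * M) (inr unit) i = M (inr unit) i := by
  simpa using listTransvecCol_mul_last_row_drop M i (Nat.zero_le _)

theorem listTransvecCol_mul_last_col (hM : M (inr unit) (inr unit) ≠ 0) (i : Fin r) :
    ((listTransvecCol M).prod * M) (inl i) (inr unit) = 0 := by
  suffices H :
    ∀ k : ℕ,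
      k ≤ r →
        (((listTransvecCol M).drop k).prod * M) (inl i) (inr unit) =
          if k ≤ i then 0 else M (inl i) (inr unit) by
    simpa only [List.drop, _root_.zero_le, ite_true] using H 0 (Nat.zero_le _)
  intro k hk
  induction hk using Nat.decreasingInduction with
  | of_succ n hn IH =>
    have hn' : n < (listTransvecCol M).length := by simpa [listTransvecCol] using hn
    let n' : Fin r := ⟨n, hn⟩
    rw [List.drop_eq_getElem_cons hn']
    have A :
      (listTransvecCol M)[n] =
        transvection (inl n') (inr unit) (-M (inl n') (inr unit) / M (inr unit) (inr unit)) := by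
      simp [listTransvecCol, n']
    simp only [Matrix.mul_assoc, A, List.prod_cons]
    by_cases h : n' = i
    · have hni : n = i := by
        cases i
        simp only [n', Fin.mk_eq_mk] at h
        simp [h]
      simp only [h, transvection_mul_apply_same, IH, ← hni, add_le_iff_nonpos_right,
          listTransvecCol_mul_last_row_drop _ _ hn]
      simp [div_eq_mul_inv, mul_assoc, inv_mul_cancel₀ hM]
    · have hni : n ≠ i := by
        rintro rfl
        cases i
        simp [n'] at h
      simp only [ne_eq, inl.injEq, Ne.symm h, not_false_eq_true, transvection_mul_apply_of_ne]
      rw [IH]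
      rcases le_or_gt (n + 1) i with (hi | hi)
      · simp only [hi, n.le_succ.trans hi, if_true]
      · rw [if_neg, if_neg]
        · simpa only [hni.symm, not_le, or_false] using Nat.lt_succ_iff_lt_or_eq.1 hi
        · simpa only [not_le] using hi
  | self =>
    simp only [length_listTransvecCol, le_refl, List.drop_eq_nil_of_le, List.prod_nil,
      Matrix.one_mul]
    rw [if_neg]
    simpa only [not_le] using i.2

theorem mul_listTransvecRow_last_col_take (i : Fin r ⊕ Unit) {k : ℕ} (hk : k ≤ r) :
    (M * ((listTransvecRow M).take k).prod) i (inr unit) = M i (inr unit) := by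
  induction' k with k IH
  · simp only [Matrix.mul_one, List.take_zero, List.prod_nil, List.take, Matrix.mul_one]
  · have hkr : k < r := hk
    let k' : Fin r := ⟨k, hkr⟩
    have :
      (listTransvecRow M)[k]? =
        ↑(transvection (inr Unit.unit) (inl k')
            (-(M (inr Unit.unit) (inr Unit.unit))⁻¹ * M (inr Unit.unit) (inl k'))) := by
      simp only [listTransvecRow, hkr, dif_pos, List.getElem?_ofFn, k']
    simp only [List.take_succ, ← Matrix.mul_assoc, this, List.prod_append, Matrix.mul_one,
      List.prod_cons, List.prod_nil, Option.toList_some]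
    rw [mul_transvection_apply_of_ne, IH hkr.le]
    simp only [Ne, not_false_iff, reduceCtorEq]

theorem mul_listTransvecRow_last_col (i : Fin r ⊕ Unit) :
    (M * (listTransvecRow M).prod) i (inr unit) = M i (inr unit) := by
  have A : (listTransvecRow M).length = r := by simp [listTransvecRow]
  rw [← List.take_length (l := listTransvecRow M), A]
  simpa using mul_listTransvecRow_last_col_take M i le_rfl

theorem mul_listTransvecRow_last_row (hM : M (inr unit) (inr unit) ≠ 0) (i : Fin r) :
    (M * (listTransvecRow M).prod) (inr unit) (inl i) = 0 := by
  suffices H :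
    ∀ k : ℕ,
      k ≤ r →
        (M * ((listTransvecRow M).take k).prod) (inr unit) (inl i) =
          if k ≤ i then M (inr unit) (inl i) else 0 by
    have A : (listTransvecRow M).length = r := by simp [listTransvecRow]
    rw [← List.take_length (l := listTransvecRow M), A]
    have : ¬r ≤ i := by simp
    simpa only [this, ite_eq_right_iff, if_false] using H r le_rfl
  intro k hk
  induction' k with n IH
  · simp only [if_true, Matrix.mul_one, List.take_zero, zero_le', List.prod_nil]
  · have hnr : n < r := hk
    let n' : Fin r := ⟨n, hnr⟩
    have A :
      (listTransvecRow M)[n]? =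
        ↑(transvection (inr unit) (inl n')
        (-(M (inr unit) (inr unit))⁻¹ * M (inr unit) (inl n'))) := by
      simp only [listTransvecRow, hnr, dif_pos, List.getElem?_ofFn, n']
    simp only [List.take_succ, A, ← Matrix.mul_assoc, List.prod_append, Matrix.mul_one,
      List.prod_cons, List.prod_nil, Option.toList_some]
    by_cases h : n' = i
    · have hni : n = i := by
        cases i
        simp only [n', Fin.mk_eq_mk] at h
        simp only [h]
      have : ¬n.succ ≤ i := by simp only [← hni, n.lt_succ_self, not_le]
      simp only [h, mul_transvection_apply_same, List.take, if_false,
        mul_listTransvecRow_last_col_take _ _ hnr.le, hni.le, this, if_true, IH hnr.le]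
      simp [mul_neg, ← mul_assoc, mul_inv_cancel₀ hM]
    · have hni : n ≠ i := by
        rintro rfl
        cases i
        tauto
      simp only [IH hnr.le, Ne, mul_transvection_apply_of_ne, Ne.symm h, inl.injEq,
        not_false_eq_true]
      rcases le_or_gt (n + 1) i with (hi | hi)
      · simp [hi, n.le_succ.trans hi, if_true]
      · rw [if_neg, if_neg]
        · simpa only [not_le] using hi
        · simpa only [hni.symm, not_le, or_false] using Nat.lt_succ_iff_lt_or_eq.1 hi

theorem listTransvecCol_mul_mul_listTransvecRow_last_col (hM : M (inr unit) (inr unit) ≠ 0)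
    (i : Fin r) :
    ((listTransvecCol M).prod * M * (listTransvecRow M).prod) (inr unit) (inl i) = 0 := by
  have : listTransvecRow M = listTransvecRow ((listTransvecCol M).prod * M) := by
    simp [listTransvecRow, listTransvecCol_mul_last_row]
  rw [this]
  apply mul_listTransvecRow_last_row
  simpa [listTransvecCol_mul_last_row] using hM

theorem listTransvecCol_mul_mul_listTransvecRow_last_row (hM : M (inr unit) (inr unit) ≠ 0)
    (i : Fin r) :
    ((listTransvecCol M).prod * M * (listTransvecRow M).prod) (inl i) (inr unit) = 0 := by
  have : listTransvecCol M = listTransvecCol (M * (listTransvecRow M).prod) := by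
    simp [listTransvecCol, mul_listTransvecRow_last_col]
  rw [this, Matrix.mul_assoc]
  apply listTransvecCol_mul_last_col
  simpa [mul_listTransvecRow_last_col] using hM

theorem isTwoBlockDiagonal_listTransvecCol_mul_mul_listTransvecRow
    (hM : M (inr unit) (inr unit) ≠ 0) :
    IsTwoBlockDiagonal ((listTransvecCol M).prod * M * (listTransvecRow M).prod) := by
  constructor
  · ext i j
    have : j = unit := by simp only [eq_iff_true_of_subsingleton]
    simp [toBlocks₁₂, this, listTransvecCol_mul_mul_listTransvecRow_last_row M hM]
  · ext i j
    have : i = unit := by simp only [eq_iff_true_of_subsingleton]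
    simp [toBlocks₂₁, this, listTransvecCol_mul_mul_listTransvecRow_last_col M hM]

theorem exists_isTwoBlockDiagonal_of_ne_zero (hM : M (inr unit) (inr unit) ≠ 0) :
    ∃ L L' : List (TStruct (Fin r ⊕ Unit) 𝕜),
      IsTwoBlockDiagonal ((L.map toMatrix).prod * M * (L'.map toMatrix).prod) := by
  let L : List (TStruct (Fin r ⊕ Unit) 𝕜) :=
    List.ofFn fun i : Fin r =>
      ⟨inl i, inr unit, by simp, -M (inl i) (inr unit) / M (inr unit) (inr unit)⟩
  let L' : List (TStruct (Fin r ⊕ Unit) 𝕜) :=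
    List.ofFn fun i : Fin r =>
      ⟨inr unit, inl i, by simp, -(M (inr unit) (inr unit))⁻¹ * M (inr unit) (inl i)⟩
  refine ⟨L, L', ?_⟩
  have A : L.map toMatrix = listTransvecCol M := by simp [L, listTransvecCol, Function.comp_def]
  have B : L'.map toMatrix = listTransvecRow M := by simp [L', listTransvecRow, Function.comp_def]
  rw [A, B]
  exact isTwoBlockDiagonal_listTransvecCol_mul_mul_listTransvecRow M hM

theorem exists_isTwoBlockDiagonal_list_transvec_mul_mul_list_transvec
    (M : Matrix (Fin r ⊕ Unit) (Fin r ⊕ Unit) 𝕜) :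
    ∃ L L' : List (TStruct (Fin r ⊕ Unit) 𝕜),
      IsTwoBlockDiagonal ((L.map toMatrix).prod * M * (L'.map toMatrix).prod) := by
  by_cases H : IsTwoBlockDiagonal M
  · refine ⟨List.nil, List.nil, by simpa using H⟩
  by_cases hM : M (inr unit) (inr unit) ≠ 0
  · exact exists_isTwoBlockDiagonal_of_ne_zero M hM
  push_neg at hM
  simp only [not_and_or, IsTwoBlockDiagonal, toBlocks₁₂, toBlocks₂₁, ← Matrix.ext_iff] at H
  have : ∃ i : Fin r, M (inl i) (inr unit) ≠ 0 ∨ M (inr unit) (inl i) ≠ 0 := by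
    cases' H with H H
    · contrapose! H
      rintro i ⟨⟩
      exact (H i).1
    · contrapose! H
      rintro ⟨⟩ j
      exact (H j).2
  rcases this with ⟨i, h | h⟩
  · let M' := transvection (inr Unit.unit) (inl i) 1 * M
    have hM' : M' (inr unit) (inr unit) ≠ 0 := by simpa [M', hM]
    rcases exists_isTwoBlockDiagonal_of_ne_zero M' hM' with ⟨L, L', hLL'⟩
    rw [Matrix.mul_assoc] at hLL'
    refine ⟨L ++ [⟨inr unit, inl i, by simp, 1⟩], L', ?_⟩
    simp only [List.map_append, List.prod_append, Matrix.mul_one, toMatrix_mk, List.prod_cons,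
      List.prod_nil, List.map, Matrix.mul_assoc (L.map toMatrix).prod]
    exact hLL'
  · let M' := M * transvection (inl i) (inr unit) 1
    have hM' : M' (inr unit) (inr unit) ≠ 0 := by simpa [M', hM]
    rcases exists_isTwoBlockDiagonal_of_ne_zero M' hM' with ⟨L, L', hLL'⟩
    refine ⟨L, ⟨inl i, inr unit, by simp, 1⟩::L', ?_⟩
    simp only [← Matrix.mul_assoc, toMatrix_mk, List.prod_cons, List.map]
    rw [Matrix.mul_assoc (L.map toMatrix).prod]
    exact hLL'

theorem exists_list_transvec_mul_mul_list_transvec_eq_diagonal_induction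
    (IH :
      ∀ M : Matrix (Fin r) (Fin r) 𝕜,
        ∃ (L₀ L₀' : List (TStruct (Fin r) 𝕜)) (D₀ : Fin r → 𝕜),
          (L₀.map toMatrix).prod * M * (L₀'.map toMatrix).prod = diagonal D₀)
    (M : Matrix (Fin r ⊕ Unit) (Fin r ⊕ Unit) 𝕜) :
    ∃ (L L' : List (TStruct (Fin r ⊕ Unit) 𝕜)) (D : Fin r ⊕ Unit → 𝕜),
      (L.map toMatrix).prod * M * (L'.map toMatrix).prod = diagonal D := by
  rcases exists_isTwoBlockDiagonal_list_transvec_mul_mul_list_transvec M with ⟨L₁, L₁', hM⟩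
  let M' := (L₁.map toMatrix).prod * M * (L₁'.map toMatrix).prod
  let M'' := toBlocks₁₁ M'
  rcases IH M'' with ⟨L₀, L₀', D₀, h₀⟩
  set c := M' (inr unit) (inr unit)
  refine
    ⟨L₀.map (sumInl Unit) ++ L₁, L₁' ++ L₀'.map (sumInl Unit),
      Sum.elim D₀ fun _ => M' (inr unit) (inr unit), ?_⟩
  suffices (L₀.map (toMatrix ∘ sumInl Unit)).prod * M' * (L₀'.map (toMatrix ∘ sumInl Unit)).prod =
      diagonal (Sum.elim D₀ fun _ => c) by
    simpa [M', c, Matrix.mul_assoc]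
  have : M' = fromBlocks M'' 0 0 (diagonal fun _ => c) := by
    rw [← fromBlocks_toBlocks M', hM.1, hM.2]
    rfl
  rw [this]
  simp [h₀]

variable {n p : Type*} [DecidableEq n] [DecidableEq p] [Fintype n] [Fintype p]

theorem reindex_exists_list_transvec_mul_mul_list_transvec_eq_diagonal (M : Matrix p p 𝕜)
    (e : p ≃ n)
    (H :
      ∃ (L L' : List (TStruct n 𝕜)) (D : n → 𝕜),
        (L.map toMatrix).prod * Matrix.reindexAlgEquiv ℕ _ e M * (L'.map toMatrix).prod =
          diagonal D) :
    ∃ (L L' : List (TStruct p 𝕜)) (D : p → 𝕜),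
      (L.map toMatrix).prod * M * (L'.map toMatrix).prod = diagonal D := by
  rcases H with ⟨L₀, L₀', D₀, h₀⟩
  refine ⟨L₀.map (reindexEquiv e.symm), L₀'.map (reindexEquiv e.symm), D₀ ∘ e, ?_⟩
  have : M = reindexAlgEquiv ℕ _ e.symm (reindexAlgEquiv ℕ _ e M) := by
    simp only [Equiv.symm_symm, submatrix_submatrix, reindex_apply, submatrix_id_id,
      Equiv.symm_comp_self, reindexAlgEquiv_apply]
  rw [this]
  simp only [toMatrix_reindexEquiv_prod, List.map_map, reindexAlgEquiv_apply]
  simp only [← reindexAlgEquiv_apply ℕ, ← reindexAlgEquiv_mul, h₀]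
  simp only [Equiv.symm_symm, reindex_apply, submatrix_diagonal_equiv, reindexAlgEquiv_apply]

theorem exists_list_transvec_mul_mul_list_transvec_eq_diagonal_aux (n : Type) [Fintype n]
    [DecidableEq n] (M : Matrix n n 𝕜) :
    ∃ (L L' : List (TStruct n 𝕜)) (D : n → 𝕜),
      (L.map toMatrix).prod * M * (L'.map toMatrix).prod = diagonal D := by
  induction' hn : Fintype.card n with r IH generalizing n M
  · refine ⟨List.nil, List.nil, fun _ => 1, ?_⟩
    ext i j
    rw [Fintype.card_eq_zero_iff] at hn
    exact hn.elim' i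
  · have e : n ≃ Fin r ⊕ Unit := by
      refine Fintype.equivOfCardEq ?_
      rw [hn]
      rw [@Fintype.card_sum (Fin r) Unit _ _]
      simp
    apply reindex_exists_list_transvec_mul_mul_list_transvec_eq_diagonal M e
    apply
      exists_list_transvec_mul_mul_list_transvec_eq_diagonal_induction fun N =>
        IH (Fin r) N (by simp)

theorem exists_list_transvec_mul_mul_list_transvec_eq_diagonal (M : Matrix n n 𝕜) :
    ∃ (L L' : List (TStruct n 𝕜)) (D : n → 𝕜),
      (L.map toMatrix).prod * M * (L'.map toMatrix).prod = diagonal D := by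
  have e : n ≃ Fin (Fintype.card n) := Fintype.equivOfCardEq (by simp)
  apply reindex_exists_list_transvec_mul_mul_list_transvec_eq_diagonal M e
  apply exists_list_transvec_mul_mul_list_transvec_eq_diagonal_aux

end Pivot
end QM

open Matrix Sum

section Dets

variable {m : Type} [Fintype m] [DecidableEq m]

lemma cMat_transvection_eq (i j : m) (q : Quaternion ℝ) :
    cMat (QM.transvection i j q) =
      (1 : Matrix (m ⊕ m) (m ⊕ m) ℂ) +
        (single (inl i) (inl j) (qPartX q) +
          single (inl i) (inr j) (-(starRingEnd ℂ) (qPartY q)) +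
          single (inr i) (inl j) (qPartY q) +
          single (inr i) (inr j) ((starRingEnd ℂ) (qPartX q))) := by
  ext (a | a) (b | b) <;> by_cases ha : a = i <;> by_cases hb : b = j <;>
    by_cases hab : a = b <;>
    simp_all [cMat, QM.transvection, Matrix.single, Matrix.one_apply, qPartX, qPartY,
      Complex.ext_iff] <;>
    (try (split <;> simp))

lemma det_cMat_transvection {i j : m} (hij : i ≠ j) (q : Quaternion ℝ) :
    (cMat (QM.transvection i j q)).det = 1 := by
  set x := qPartX q
  set y := qPartY q
  have key : cMat (QM.transvection i j q) =
      Matrix.transvection (inl i) (inl j) x *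
        (Matrix.transvection (inl i) (inr j) (-(starRingEnd ℂ) y) *
          (Matrix.transvection (inr i) (inl j) y *
            Matrix.transvection (inr i) (inr j) ((starRingEnd ℂ) x))) := by
    rw [cMat_transvection_eq]
    simp only [Matrix.transvection]
    have hji : j ≠ i := Ne.symm hij
    simp only [Matrix.mul_add, Matrix.add_mul, Matrix.one_mul, Matrix.mul_one,
      single_mul_single_of_ne, ne_eq, inl.injEq, inr.injEq, hji, not_false_eq_true,
      reduceCtorEq, add_zero, zero_add]
    abel
  rw [key, det_mul, det_mul, det_mul, det_transvection_of_ne, det_transvection_of_ne,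
    det_transvection_of_ne, det_transvection_of_ne] <;>
    simp [hij]

def pairEquiv (m : Type) : m ⊕ m ≃ Fin 2 × m where
  toFun := Sum.elim (fun i => (0, i)) (fun i => (1, i))
  invFun p := if p.1 = 0 then Sum.inl p.2 else Sum.inr p.2
  left_inv := by rintro (i | i) <;> simp
  right_inv := by rintro ⟨k, i⟩; fin_cases k <;> simp

lemma det_cMat_diagonal (D : m → Quaternion ℝ) :
    (cMat (diagonal D)).det = ((∏ i, Quaternion.normSq (D i) : ℝ) : ℂ) := by
  have key : cMat (diagonal D) =
      (blockDiagonal fun i : m =>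
          !![qPartX (D i), -(starRingEnd ℂ) (qPartY (D i));
             qPartY (D i), (starRingEnd ℂ) (qPartX (D i))]).submatrix (pairEquiv m) (pairEquiv m) := by
    ext (a | a) (b | b) <;> by_cases hab : a = b <;>
      simp_all [cMat, pairEquiv, blockDiagonal_apply, diagonal_apply, qPartX, qPartY,
        Complex.ext_iff, Matrix.one_apply]
  rw [key, Matrix.det_submatrix_equiv_self, Matrix.det_blockDiagonal, Complex.ofReal_prod]
  refine Finset.prod_congr rfl fun q _ => ?_
  rw [Matrix.det_fin_two_of]
  apply Complex.ext <;>
    simp [qPartX, qPartY, Quaternion.normSq_def', Complex.mul_re, Complex.mul_im, ← Complex.ofReal_pow] <;> ring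

end Dets

section Glue

open QM

lemma det_cMat_list_prod {m : Type} [Fintype m] [DecidableEq m]
    (L : List (QM.TStruct m (Quaternion ℝ))) :
    (cMat (L.map QM.TStruct.toMatrix).prod).det = 1 := by
  induction L with
  | nil => simp [cMat_one]
  | cons t L ih =>
    rw [List.map_cons, List.prod_cons, cMat_mul, det_mul, ih, mul_one,
      show QM.TStruct.toMatrix t = QM.transvection t.i t.j t.c from rfl,
      det_cMat_transvection t.hij]

lemma exists_det_cMat {m : Type} [Fintype m] [DecidableEq m]
    (M : Matrix m m (Quaternion ℝ)) :
    ∃ r : ℝ, 0 ≤ r ∧ (cMat M).det = (r : ℂ) := by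
  obtain ⟨L, L', D, h⟩ := QM.Pivot.exists_list_transvec_mul_mul_list_transvec_eq_diagonal M
  refine ⟨∏ i, Quaternion.normSq (D i),
    Finset.prod_nonneg fun i _ => by
      rw [Quaternion.normSq_def']; positivity, ?_⟩
  have h2 := congrArg (fun N => (cMat N).det) h
  simp only [cMat_mul, det_mul, det_cMat_list_prod, one_mul, mul_one,
    det_cMat_diagonal] at h2
  exact h2

end Glue

theorem stmt_9 {n : ℕ} (A B : Matrix (Fin n) (Fin n) (Quaternion ℝ)) :
    Sdet (A * B) = Sdet A * Sdet B := by
  obtain ⟨a, ha, hA⟩ := exists_det_cMat A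
  obtain ⟨b, hb, hB⟩ := exists_det_cMat B
  simp only [Sdet, cMat_mul, det_mul, hA, hB, ← Complex.ofReal_mul, Complex.ofReal_re]
  exact Real.sqrt_mul ha b
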